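/- Let F be a field with a valuation v, and let K ⊆ K' and K ⊆ L be subfields of F. Assume that the extension L/K is vs-defectless, that Γ(L) ∩ Γ(K') = Γ(K) (intersection of value groups inside the value group of F), and that the residue field k(L) is linearly disjoint from k(K') over k(K) inside the residue field of F. Then L is valuatively disjoint from K' over K: every finite K-valuation independent family of elements of L is also K'-valuation independent. -/

import Mathlib

open scoped Pointwise

/-- Linear independence of a finite family over a subset `E` of a commutative ring: no
nontrivial linear combination with coefficients in `E` vanishes. -/
def LinIndepOver {R : Type*} [CommRing R] (E : Set R) {n : ℕ} (b : Fin n → R) : Prop :=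
  ∀ c : Fin n → R, (∀ i, c i ∈ E) → (∑ i, c i * b i) = 0 → ∀ i, c i = 0

variable {F Γ₀ : Type*} [Field F] [LinearOrderedCommGroupWithZero Γ₀]

/-- A finite family `b` of elements of `F` is `E`-valuation independent:
`v(∑ cᵢ bᵢ) = minᵢ v(cᵢ bᵢ)` for all coefficients `cᵢ ∈ E`.  (In Mathlib's multiplicative
convention for valuations, the additive `min` becomes the multiplicative `sup`, and the additive
`∞` becomes `0`.) -/
def ValIndep (v : Valuation F Γ₀) (E : Set F) {n : ℕ} (b : Fin n → F) : Prop :=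
  letI : OrderBot Γ₀ := { bot := 0, bot_le := fun _ => zero_le' }
  ∀ c : Fin n → F, (∀ i, c i ∈ E) →
    v (∑ i, c i * b i) = Finset.univ.sup fun i => v (c i * b i)

/-- The `E`-linear span (inside `F`) of a subset `s ⊆ F`, for `E ⊆ F`. -/
def SpanOver (E s : Set F) : Set F :=
  {y | ∃ (n : ℕ) (c t : Fin n → F),
    (∀ i, c i ∈ E) ∧ (∀ i, t i ∈ s) ∧ y = ∑ i, c i * t i}

/-- The extension `L/E` is vs-defectless: every finite-dimensional `E`-vector subspace of `L`
admits an `E`-basis which is `E`-valuation independent. -/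
def VsDefectless (v : Valuation F Γ₀) (E L : Set F) : Prop :=
  ∀ (n : ℕ) (x : Fin n → F), (∀ i, x i ∈ L) →
    ∃ (m : ℕ) (b : Fin m → F),
      ValIndep v E b ∧ LinIndepOver E b ∧
        SpanOver E (Set.range b) = SpanOver E (Set.range x)

/-- The value group `Γ(E) = v(E∖{0})` of a subset `E ⊆ F`, as a subset of `Γ₀`. -/
def ValueGroupSet (v : Valuation F Γ₀) (E : Set F) : Set Γ₀ :=
  v '' (E \ {0})

/-- The residue field `k_F = O_F/m_F` of the valued field `(F, v)`. -/
abbrev ResField (v : Valuation F Γ₀) : Type _ :=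
  IsLocalRing.ResidueField v.valuationSubring

/-- The image `k(E) = res(O_E)` of a subset `E ⊆ F` in the residue field of `(F, v)`. -/
def ResidueSet (v : Valuation F Γ₀) (E : Set F) : Set (ResField v) :=
  {y | ∃ x : v.valuationSubring, (x : F) ∈ E ∧ IsLocalRing.residue _ x = y}

lemma my_isUnit_iff (v : Valuation F Γ₀) (x : v.valuationSubring) :
    IsUnit x ↔ v (x : F) = 1 := by
  constructor
  · rintro ⟨u, rfl⟩
    have h1 : ((u : v.valuationSubring) : F) * (((u⁻¹ : _) : v.valuationSubring) : F) = 1 := by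
      norm_cast
      simp [u.mul_inv]
    have h2 := congrArg v h1
    rw [map_mul, map_one] at h2
    have ha : v ((u : v.valuationSubring) : F) ≤ 1 := (u : v.valuationSubring).2
    have hb : v (((u⁻¹ : _) : v.valuationSubring) : F) ≤ 1 := ((u⁻¹ : _) : v.valuationSubring).2
    refine le_antisymm ha ?_
    calc (1 : Γ₀) = v _ * v _ := h2.symm
    _ ≤ v ((u : v.valuationSubring) : F) * 1 := mul_le_mul_right hb _
    _ = _ := mul_one _
  · intro h
    have hx0 : (x : F) ≠ 0 := by
      intro h0
      rw [h0, map_zero] at h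
      exact zero_ne_one h
    have hinv : (x : F)⁻¹ ∈ v.valuationSubring := by
      rw [Valuation.mem_valuationSubring_iff, map_inv₀, h, inv_one]
    refine IsUnit.of_mul_eq_one (a := x) ⟨(x : F)⁻¹, hinv⟩ ?_
    ext
    push_cast
    field_simp

lemma my_sum_reindex {α M : Type*} [AddCommMonoid M] (S : Finset α) {m : ℕ}
    (σ : Fin m ≃ {i // i ∈ S}) (f : α → M) :
    ∑ j : Fin m, f (σ j : α) = ∑ i ∈ S, f i := by
  rw [← Finset.sum_coe_sort S f]
  exact Equiv.sum_comp σ (fun x : {i // i ∈ S} => f (x : α))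

lemma my_residue_eq_zero_iff (v : Valuation F Γ₀) (x : v.valuationSubring) :
    IsLocalRing.residue _ x = 0 ↔ v (x : F) < 1 := by
  rw [IsLocalRing.residue_eq_zero_iff, IsLocalRing.mem_maximalIdeal, mem_nonunits_iff,
    my_isUnit_iff]
  exact ⟨fun h => lt_of_le_of_ne x.2 h, fun h => ne_of_lt h⟩

/-- (Valuative disjointness.)  Let `K ⊆ K'` and `K ⊆ L` be subfields of a
valued field `(F, v)`.  If `L/K` is vs-defectless, `Γ(L) ∩ Γ(K') = Γ(K)` and `k(L)` is linearly
disjoint from `k(K')` over `k(K)` inside the residue field of `F`, then every finite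
`K`-valuation independent family of elements of `L` is `K'`-valuation independent. -/
theorem valuatively_disjoint
    (F Γ₀ : Type*) [Field F] [LinearOrderedCommGroupWithZero Γ₀]
    (v : Valuation F Γ₀)
    (K K' L : Subfield F) (hKK' : K ≤ K') (hKL : K ≤ L)
    (hdef : VsDefectless v (K : Set F) (L : Set F))
    (hΓ : ValueGroupSet v (L : Set F) ∩ ValueGroupSet v (K' : Set F)
        = ValueGroupSet v (K : Set F))
    (hres : ∀ (n : ℕ) (x : Fin n → ResField v),
        (∀ i, x i ∈ ResidueSet v (L : Set F)) →
        LinIndepOver (ResidueSet v (K : Set F)) x →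
        LinIndepOver (ResidueSet v (K' : Set F)) x) :
    ∀ (n : ℕ) (b : Fin n → F), (∀ i, b i ∈ L) →
      ValIndep v (K : Set F) b → ValIndep v (K' : Set F) b := by
  intro n b hbL hKind
  intro c hcK'
  letI : OrderBot Γ₀ := { bot := 0, bot_le := fun _ => zero_le' }
  set γ := Finset.univ.sup (fun i => v (c i * b i)) with hγdef
  show v (∑ i, c i * b i) = γ
  by_cases hγ : γ = 0
  · have hall : ∀ i, c i * b i = 0 := by
      intro i
      have h1 : v (c i * b i) ≤ γ := by rw [hγdef]; exact Finset.le_sup (f := fun i => v (c i * b i)) (Finset.mem_univ i)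
      rw [hγ] at h1
      have h2 : v (c i * b i) = 0 := le_antisymm h1 zero_le'
      exact (Valuation.zero_iff v).mp h2
    rw [Finset.sum_congr rfl (fun i _ => hall i), Finset.sum_const_zero, map_zero, hγ]
  · -- main case
    have huniv : (Finset.univ : Finset (Fin n)).Nonempty := by
      rcases (Finset.univ : Finset (Fin n)).eq_empty_or_nonempty with h | h
      · exact absurd (by rw [hγdef, h, Finset.sup_empty]; rfl) hγ
      · exact h
    obtain ⟨i₀, -, h0⟩ := Finset.exists_mem_eq_sup Finset.univ huniv (fun i => v (c i * b i))
    rw [← hγdef] at h0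
    -- h0 : γ = v (c i₀ * b i₀)
    have hvcb₀ : v (c i₀ * b i₀) ≠ 0 := fun h => hγ (h0.trans h)
    have hc0 : c i₀ ≠ 0 := by
      intro h; apply hvcb₀; rw [h, zero_mul, map_zero]
    have hb0 : b i₀ ≠ 0 := by
      intro h; apply hvcb₀; rw [h, mul_zero, map_zero]
    have hvc₀ : v (c i₀) ≠ 0 := fun h => hc0 ((Valuation.zero_iff v).mp h)
    classical
    set S := Finset.univ.filter (fun i => v (c i * b i) = γ) with hSdef
    have hmemS : ∀ i, i ∈ S ↔ v (c i * b i) = γ := by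
      intro i; rw [hSdef, Finset.mem_filter]; simp
    have hi₀S : i₀ ∈ S := (hmemS i₀).mpr h0.symm
    have hSc : ∀ i ∈ S, c i ≠ 0 := by
      intro i hi h
      apply hγ; rw [← (hmemS i).mp hi, h, zero_mul, map_zero]
    have hSb : ∀ i ∈ S, b i ≠ 0 := by
      intro i hi h
      apply hγ; rw [← (hmemS i).mp hi, h, mul_zero, map_zero]
    -- choose the K-scaling elements a i
    have hex : ∀ i, ∃ a : F, i ∈ S → a ∈ K ∧ a ≠ 0 ∧ v a * v (c i₀) = v (c i) := by
      intro i
      by_cases hi : i ∈ S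
      · have hval : v (c i) * v (b i) = v (c i₀) * v (b i₀) := by
          rw [← map_mul, ← map_mul, (hmemS i).mp hi, h0]
        have hciK' : c i / c i₀ ∈ (K' : Set F) := by
          exact Subfield.div_mem K' (hcK' i) (hcK' i₀)
        have hci0 : c i / c i₀ ≠ 0 := div_ne_zero (hSc i hi) hc0
        have hbiL : b i₀ / b i ∈ (L : Set F) := Subfield.div_mem L (hbL i₀) (hbL i)
        have hbi0 : b i₀ / b i ≠ 0 := div_ne_zero hb0 (hSb i hi)
        have heq : v (c i / c i₀) = v (b i₀ / b i) := by
          rw [map_div₀, map_div₀]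
          rw [div_eq_div_iff ((Valuation.zero_iff v).not.mpr hc0) ((Valuation.zero_iff v).not.mpr (hSb i hi))]
          rw [mul_comm (v (c i₀)) (v (b i₀))] at hval
          exact hval
        have hmem : v (c i / c i₀) ∈ ValueGroupSet v (K : Set F) := by
          rw [← hΓ]
          constructor
          · rw [heq]
            exact ⟨b i₀ / b i, ⟨hbiL, by simpa using hbi0⟩, rfl⟩
          · exact ⟨c i / c i₀, ⟨hciK', by simpa using hci0⟩, rfl⟩
        obtain ⟨a, ⟨haK, ha0⟩, hav⟩ := hmem
        refine ⟨a, fun _ => ⟨haK, by simpa using ha0, ?_⟩⟩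
        rw [hav, map_div₀, div_mul_cancel₀]
        exact (Valuation.zero_iff v).not.mpr hc0
      · exact ⟨0, fun h => absurd h hi⟩
    choose a ha using hex
    have haK : ∀ i ∈ S, a i ∈ K := fun i hi => (ha i hi).1
    have ha0 : ∀ i ∈ S, a i ≠ 0 := fun i hi => (ha i hi).2.1
    have hav : ∀ i ∈ S, v (a i) * v (c i₀) = v (c i) := fun i hi => (ha i hi).2.2
    have hva₀ : v (a i₀) = 1 := by
      have := hav i₀ hi₀S
      exact mul_right_cancel₀ hvc₀ (by rw [this, one_mul])
    set δ : Γ₀ := v (a i₀ * b i₀) with hδdef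
    have hδ0 : δ ≠ 0 := by
      rw [hδdef, map_mul, hva₀, one_mul]
      exact (Valuation.zero_iff v).not.mpr hb0
    have hδ : ∀ i ∈ S, v (a i * b i) = δ := by
      intro i hi
      apply mul_left_cancel₀ hvc₀
      rw [hδdef, map_mul, map_mul, ← mul_assoc, mul_comm (v (c i₀)) (v (a i)), hav i hi,
        ← map_mul, (hmemS i).mp hi, ← mul_assoc, mul_comm (v (c i₀)) (v (a i₀)), hva₀, one_mul,
        ← map_mul, h0]
    have hcδγ : v (c i₀) * δ = γ := by
      rw [hδdef, map_mul, hva₀, one_mul, ← map_mul, h0]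
    -- the w family
    set w : Fin n → F := fun i => (a i * b i) / (a i₀ * b i₀) with hwdef
    have hab0 : a i₀ * b i₀ ≠ 0 := mul_ne_zero (ha0 i₀ hi₀S) hb0
    have hw1 : ∀ i ∈ S, v (w i) = 1 := by
      intro i hi
      rw [hwdef]; simp only
      rw [map_div₀, hδ i hi, ← hδdef, div_self hδ0]
    have hwL : ∀ i ∈ S, w i ∈ (L : Set F) := by
      intro i hi
      exact Subfield.div_mem L (Subfield.mul_mem L (hKL (haK i hi)) (hbL i))
        (Subfield.mul_mem L (hKL (haK i₀ hi₀S)) (hbL i₀))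
    -- index setup
    set m := Fintype.card {i // i ∈ S} with hmdef
    set σ : Fin m ≃ {i // i ∈ S} := (Fintype.equivFin {i // i ∈ S}).symm with hσdef
    have hwmem : ∀ j : Fin m, w (σ j : Fin n) ∈ v.valuationSubring := fun j =>
      le_of_eq (hw1 _ (σ j).2)
    set wsub : Fin m → v.valuationSubring := fun j => ⟨w (σ j : Fin n), hwmem j⟩ with hwsubdef
    set Wfam : Fin m → ResField v := fun j => IsLocalRing.residue _ (wsub j) with hWdef
    have hWL : ∀ j, Wfam j ∈ ResidueSet v (L : Set F) := fun j =>
      ⟨wsub j, hwL _ (σ j).2, rfl⟩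
    -- Claim A : K-linear independence of residues
    have claimA : LinIndepOver (ResidueSet v (K : Set F)) Wfam := by
      intro d hd hsum j
      by_contra hdj
      choose e heK heres using hd
      have hres0 : IsLocalRing.residue _ (∑ j', e j' * wsub j') = 0 := by
        rw [map_sum]
        calc ∑ j', IsLocalRing.residue _ (e j' * wsub j')
            = ∑ j', d j' * Wfam j' := by
              refine Finset.sum_congr rfl fun j' _ => ?_
              rw [map_mul, heres, hWdef]
          _ = 0 := hsum
      have hvlt : v ((∑ j', e j' * wsub j' : v.valuationSubring) : F) < 1 :=
        (my_residue_eq_zero_iff v _).mp hres0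
      have hcoe : ((∑ j', e j' * wsub j' : v.valuationSubring) : F)
          = ∑ j', (e j' : F) * w (σ j' : Fin n) := by
        push_cast [hwsubdef]
        rfl
      rw [hcoe] at hvlt
      set E : Fin n → F := fun i => if h : i ∈ S then (e (σ.symm ⟨i, h⟩) : F) * a i else 0
        with hEdef
      have hEK : ∀ i, E i ∈ (K : Set F) := by
        intro i
        rw [hEdef]
        dsimp only
        split
        · next h => exact Subfield.mul_mem K (heK _) (haK i h)
        · exact Subfield.zero_mem K
      have hkey := hKind E hEK
      have hE : ∀ j' : Fin m, E (σ j' : Fin n) = (e j' : F) * a (σ j' : Fin n) := by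
        intro j'
        rw [hEdef]
        dsimp only
        rw [dif_pos (σ j').2]
        congr 2
        rw [Subtype.coe_eta, Equiv.symm_apply_apply]
      have hL1 : ∑ i, E i * b i = (a i₀ * b i₀) * ∑ j', (e j' : F) * w (σ j' : Fin n) := by
        rw [← Finset.sum_subset (Finset.subset_univ S)
          (fun i _ hi => by rw [hEdef]; dsimp only; rw [dif_neg hi, zero_mul]),
          ← my_sum_reindex S σ (fun i => E i * b i), Finset.mul_sum]
        refine Finset.sum_congr rfl fun j' _ => ?_
        rw [hE j', hwdef]
        dsimp only
        field_simp
        rw [mul_div_cancel_right₀ _ (ha0 i₀ hi₀S)]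
      have hlt : v (∑ i, E i * b i) < δ := by
        rw [hL1, map_mul, ← hδdef]
        calc δ * v (∑ j', (e j' : F) * w (σ j' : Fin n)) < δ * 1 :=
          mul_lt_mul_of_pos_left hvlt (zero_lt_iff.mpr hδ0)
        _ = δ := mul_one δ
      have hge : δ ≤ v (∑ i, E i * b i) := by
        rw [hkey]
        have h1 : v ((e j : F)) = 1 := by
          refine le_antisymm (e j).2 (not_lt.mp ?_)
          rw [← my_residue_eq_zero_iff v (e j), heres j]
          exact hdj
        have h2 : v (E (σ j : Fin n) * b (σ j : Fin n)) = δ := by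
          rw [hE j, mul_assoc, map_mul, h1, one_mul, hδ _ (σ j).2]
        rw [← h2]
        exact Finset.le_sup (f := fun i => v (E i * b i)) (Finset.mem_univ _)
      exact absurd (lt_of_le_of_lt hge hlt) (lt_irrefl δ)
    have claimA' := hres m Wfam hWL claimA
    -- Claim B: the u family
    set u : Fin n → F := fun i => c i / (c i₀ * a i) with hudef
    have hu1 : ∀ i ∈ S, v (u i) = 1 := by
      intro i hi
      rw [hudef]
      dsimp only
      rw [map_div₀, map_mul, mul_comm (v (c i₀)) (v (a i)), hav i hi,
        div_self ((Valuation.zero_iff v).not.mpr (hSc i hi))]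
    have huK' : ∀ i ∈ S, u i ∈ (K' : Set F) := fun i hi =>
      Subfield.div_mem K' (hcK' i) (Subfield.mul_mem K' (hcK' i₀) (hKK' (haK i hi)))
    have humem : ∀ j : Fin m, u (σ j : Fin n) ∈ v.valuationSubring := fun j =>
      le_of_eq (hu1 _ (σ j).2)
    set usub : Fin m → v.valuationSubring := fun j => ⟨u (σ j : Fin n), humem j⟩ with husubdef
    set j₀ : Fin m := σ.symm ⟨i₀, hi₀S⟩ with hj₀def
    have hne : IsLocalRing.residue _ (∑ j', usub j' * wsub j') ≠ 0 := by
      intro hzero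
      have h1 : ∑ j', (IsLocalRing.residue _ (usub j')) * Wfam j' = 0 := by
        calc ∑ j', (IsLocalRing.residue _ (usub j')) * Wfam j'
            = IsLocalRing.residue _ (∑ j', usub j' * wsub j') := by
              rw [map_sum]
              exact Finset.sum_congr rfl fun j' _ => by rw [map_mul, hWdef]
          _ = 0 := hzero
      have h2 := claimA' (fun j' => IsLocalRing.residue _ (usub j'))
        (fun j' => ⟨usub j', huK' _ (σ j').2, rfl⟩) h1 j₀
      rw [my_residue_eq_zero_iff] at h2
      have h3 : v ((usub j₀ : F)) = 1 := by
        rw [husubdef]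
        exact hu1 _ (σ j₀).2
      rw [h3] at h2
      exact lt_irrefl 1 h2
    have hcoe2 : ((∑ j', usub j' * wsub j' : v.valuationSubring) : F)
        = ∑ j', u (σ j' : Fin n) * w (σ j' : Fin n) := by
      push_cast [husubdef, hwsubdef]
      rfl
    have hvsum1 : v (∑ j', u (σ j' : Fin n) * w (σ j' : Fin n)) = 1 := by
      refine le_antisymm (v.map_sum_le ?_) (not_lt.mp ?_)
      · intro j' _
        rw [map_mul, hu1 _ (σ j').2, hw1 _ (σ j').2, mul_one]
      · rw [← hcoe2]
        exact fun h => hne ((my_residue_eq_zero_iff v _).mpr h)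
    have hsumS : v (∑ i ∈ S, c i * b i) = γ := by
      have hid : ∑ i ∈ S, c i * b i
          = (c i₀ * (a i₀ * b i₀)) * ∑ j', u (σ j' : Fin n) * w (σ j' : Fin n) := by
        rw [Finset.mul_sum, ← my_sum_reindex S σ (fun i => c i * b i)]
        refine Finset.sum_congr rfl fun j' _ => ?_
        rw [hudef, hwdef]
        dsimp only
        have hi := (σ j').2
        have h1 : a (σ j' : Fin n) ≠ 0 := ha0 _ hi
        field_simp [hc0, hb0, ha0 i₀ hi₀S, h1]
      rw [hid, map_mul, hvsum1, mul_one, map_mul, ← hδdef, hcδγ]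
    have hrest : v (∑ i ∈ Finset.univ.filter (fun i => ¬ v (c i * b i) = γ), c i * b i) < γ := by
      apply v.map_sum_lt hγ
      intro i hi
      rw [Finset.mem_filter] at hi
      refine lt_of_le_of_ne ?_ hi.2
      rw [hγdef]
      exact Finset.le_sup (f := fun i => v (c i * b i)) (Finset.mem_univ i)
    calc v (∑ i, c i * b i)
        = v ((∑ i ∈ S, c i * b i)
            + ∑ i ∈ Finset.univ.filter (fun i => ¬ v (c i * b i) = γ), c i * b i) := by
          rw [hSdef, Finset.sum_filter_add_sum_filter_not]
      _ = γ := by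
          rw [Valuation.map_add_eq_of_lt_left v (hsumS ▸ hrest)]
          exact hsumS
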